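/- Let P ∈ ℝ[x₁,…,xₙ] be a nonzero polynomial with deg(P) = deg_{xₙ}(P), and let K ⊂ ℝⁿ be a compact set. Then there exists M_K > 0 such that for every M ≥ M_K, the polynomial γ(x) := xₙ(1 − xₙ·P(x)²/M)² has ∂γ/∂xₙ strictly positive on K ∩ {xₙ ≤ 0}; moreover, for every M > 0, ∂γ/∂xₙ equals 1 at every point of the set {x : xₙ·P(x) = 0}. -/

import Mathlib

open MvPolynomial

lemma eval_hasFDerivAt {m : ℕ} (p : MvPolynomial (Fin m) ℝ) (x : Fin m → ℝ) :
    HasFDerivAt (fun y : Fin m → ℝ => eval y p)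
      (∑ i : Fin m, eval x (pderiv i p) • (ContinuousLinearMap.proj i : (Fin m → ℝ) →L[ℝ] ℝ)) x := by
  induction p using MvPolynomial.induction_on with
  | C a =>
      simp only [eval_C, pderiv_C, map_zero, zero_smul, Finset.sum_const_zero]
      exact hasFDerivAt_const a x
  | add p q hp hq =>
      simp only [map_add, add_smul, Finset.sum_add_distrib]
      exact hp.add hq
  | mul_X p i hp =>
      have hx : HasFDerivAt (fun y : Fin m → ℝ => y i)
          (ContinuousLinearMap.proj i : (Fin m → ℝ) →L[ℝ] ℝ) x := by
        exact (ContinuousLinearMap.proj i : (Fin m → ℝ) →L[ℝ] ℝ).hasFDerivAt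
      have := hp.mul hx
      simp only [eval_mul, eval_X] at this ⊢
      refine HasFDerivAt.congr_fderiv this ?_
      ext v
      classical
      simp only [pderiv_mul, pderiv_X, map_add, eval_mul,
        ContinuousLinearMap.sum_apply, ContinuousLinearMap.smul_apply,
        ContinuousLinearMap.add_apply, ContinuousLinearMap.proj_apply, smul_eq_mul,
        Pi.single_apply, apply_ite (eval x), map_one, map_zero,
        add_mul, ite_mul, one_mul, zero_mul, mul_ite, mul_zero, mul_one,
        Finset.sum_add_distrib, Finset.sum_ite_eq, Finset.mem_univ, if_pos]
      simp only [eval_X, Finset.mul_sum]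
      rw [add_comm]
      congr 1
      exact Finset.sum_congr rfl fun j _ => by ring

lemma fderiv_eval_single {m : ℕ} (p : MvPolynomial (Fin m) ℝ) (x : Fin m → ℝ) (i : Fin m) :
    fderiv ℝ (fun y : Fin m → ℝ => eval y p) x (Pi.single i 1) = eval x (pderiv i p) := by
  classical
  rw [(eval_hasFDerivAt p x).fderiv]
  simp only [ContinuousLinearMap.sum_apply, ContinuousLinearMap.smul_apply,
    ContinuousLinearMap.proj_apply, smul_eq_mul, Pi.single_apply, mul_ite, mul_one, mul_zero]
  rw [Finset.sum_ite_eq' Finset.univ i (fun j => eval x (pderiv j p))]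
  simp

set_option maxHeartbeats 2000000 in
/-- For γ(x) := xₙ(1 − xₙP(x)²/M)² and K compact there is M_K > 0 such that for
M ≥ M_K the partial derivative ∂γ/∂xₙ is strictly positive on K ∩ {xₙ ≤ 0};
moreover for all M > 0 it equals 1 on {xₙP(x) = 0}. -/
theorem stmt_11 (n : ℕ) (P : MvPolynomial (Fin (n + 1)) ℝ) (hP : P ≠ 0)
    (hdeg : P.totalDegree = P.degreeOf (Fin.last n))
    (K : Set (Fin (n + 1) → ℝ)) (hK : IsCompact K) :
    (∃ MK > (0 : ℝ), ∀ M : ℝ, MK ≤ M → ∀ x ∈ K, x (Fin.last n) ≤ 0 →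
      0 < fderiv ℝ
        (fun y : Fin (n + 1) → ℝ =>
          y (Fin.last n) * (1 - y (Fin.last n) * (eval y P) ^ 2 / M) ^ 2)
        x (Pi.single (Fin.last n) 1)) ∧
    (∀ M : ℝ, 0 < M → ∀ x : Fin (n + 1) → ℝ, x (Fin.last n) * eval x P = 0 →
      fderiv ℝ
        (fun y : Fin (n + 1) → ℝ =>
          y (Fin.last n) * (1 - y (Fin.last n) * (eval y P) ^ 2 / M) ^ 2)
        x (Pi.single (Fin.last n) 1) = 1) := by
  set l := Fin.last n
  -- the polynomial whose evaluation is γ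
  set Γ : ℝ → MvPolynomial (Fin (n + 1)) ℝ :=
    fun M => X l * (1 - X l * P ^ 2 * C M⁻¹) ^ 2 with hΓ
  have hfun : ∀ M : ℝ,
      (fun y : Fin (n + 1) → ℝ =>
          y l * (1 - y l * (eval y P) ^ 2 / M) ^ 2)
        = fun y => eval y (Γ M) := by
    intro M
    funext y
    simp [hΓ, div_eq_mul_inv]
  have hval : ∀ M : ℝ, ∀ x : Fin (n + 1) → ℝ,
      fderiv ℝ (fun y : Fin (n + 1) → ℝ =>
          y l * (1 - y l * (eval y P) ^ 2 / M) ^ 2) x (Pi.single l 1)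
        = eval x (pderiv l (Γ M)) := by
    intro M x
    rw [hfun M]
    exact fderiv_eval_single _ x l
  have hcomp : ∀ M : ℝ, ∀ x : Fin (n + 1) → ℝ,
      eval x (pderiv l (Γ M)) =
        (1 - x l * (eval x P) ^ 2 * M⁻¹) ^ 2
          - 2 * x l * (1 - x l * (eval x P) ^ 2 * M⁻¹)
            * ((eval x P) ^ 2 + 2 * x l * eval x P * eval x (pderiv l P)) * M⁻¹ := by
    intro M x
    simp only [hΓ]
    simp [pderiv_mul, pderiv_pow, pderiv_X_self, pderiv_C, pderiv_one]
    ring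
  constructor
  · -- first part
    obtain ⟨C₀, hC₀⟩ := hK.exists_bound_of_continuousOn
      (f := fun x : Fin (n + 1) → ℝ => x l) (continuous_apply l).continuousOn
    obtain ⟨C₁, hC₁⟩ := hK.exists_bound_of_continuousOn
      (f := fun x : Fin (n + 1) → ℝ => eval x P) (MvPolynomial.continuous_eval P).continuousOn
    obtain ⟨C₂, hC₂⟩ := hK.exists_bound_of_continuousOn
      (f := fun x : Fin (n + 1) → ℝ => eval x (pderiv l P))
      (MvPolynomial.continuous_eval (pderiv l P)).continuousOn
    set C : ℝ := max 1 (max C₀ (max C₁ C₂)) with hC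
    have hC1 : (1 : ℝ) ≤ C := le_max_left _ _
    have hbt : ∀ x ∈ K, |x l| ≤ C := fun x hx =>
      (hC₀ x hx).trans ((le_max_left _ _).trans (le_max_right _ _))
    have hbp : ∀ x ∈ K, |eval x P| ≤ C := fun x hx =>
      (hC₁ x hx).trans (((le_max_left _ _).trans (le_max_right _ _)).trans (le_max_right _ _))
    have hbq : ∀ x ∈ K, |eval x (pderiv l P)| ≤ C := fun x hx =>
      (hC₂ x hx).trans (((le_max_right _ _).trans (le_max_right _ _)).trans (le_max_right _ _))
    refine ⟨max 1 (8 * C ^ 4 * (1 + C ^ 3)), lt_of_lt_of_le one_pos (le_max_left _ _), ?_⟩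
    intro M hM x hx hxl
    have hM1 : (1 : ℝ) ≤ M := (le_max_left _ _).trans hM
    have hMC : 8 * C ^ 4 * (1 + C ^ 3) ≤ M := (le_max_right _ _).trans hM
    have hM0 : (0 : ℝ) < M := lt_of_lt_of_le one_pos hM1
    rw [hval M x, hcomp M x]
    set t := x l with ht
    set a := eval x P with ha
    set b := eval x (pderiv l P) with hb
    have h1 : |t| ≤ C := hbt x hx
    have h2 : |a| ≤ C := hbp x hx
    have h3 : |b| ≤ C := hbq x hx
    have ht0 : t ≤ 0 := hxl
    have htC : -C ≤ t := neg_le_of_abs_le h1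
    have ha2 : a ^ 2 ≤ C ^ 2 := by nlinarith [abs_nonneg a, neg_abs_le a, le_abs_self a]
    -- A := 1 - t * a^2 / M ≥ 1
    have hA1 : 1 ≤ 1 - t * a ^ 2 * M⁻¹ := by
      have : t * a ^ 2 * M⁻¹ ≤ 0 := by
        apply mul_nonpos_of_nonpos_of_nonneg
        · exact mul_nonpos_of_nonpos_of_nonneg ht0 (sq_nonneg a)
        · positivity
      linarith
    have hA2 : 1 - t * a ^ 2 * M⁻¹ ≤ 1 + C ^ 3 := by
      have h4 : -t * a ^ 2 ≤ C * C ^ 2 := by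
        apply mul_le_mul _ ha2 (sq_nonneg a) (le_trans zero_le_one hC1)
        linarith
      have h5 : -t * a ^ 2 * M⁻¹ ≤ C ^ 3 := by
        calc -t * a ^ 2 * M⁻¹ ≤ C ^ 3 * M⁻¹ := by
              apply mul_le_mul_of_nonneg_right _ (by positivity)
              nlinarith
          _ ≤ C ^ 3 * 1 := by
              apply mul_le_mul_of_nonneg_left _ (by positivity)
              rw [inv_le_one_iff₀]; right; exact hM1
          _ = C ^ 3 := mul_one _
      linarith
    -- bound the second term
    have hE : -(2 * C ^ 3) ≤ a ^ 2 + 2 * t * a * b := by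
      have : |2 * t * a * b| ≤ 2 * C ^ 3 := by
        rw [abs_mul, abs_mul, abs_mul]
        have h2C : (0:ℝ) ≤ C := le_trans zero_le_one hC1
        calc |2| * |t| * |a| * |b| ≤ 2 * C * C * C := by
              apply mul_le_mul _ h3 (abs_nonneg b) (by positivity)
              apply mul_le_mul _ h2 (abs_nonneg a) (by positivity)
              apply mul_le_mul _ h1 (abs_nonneg t) (by positivity)
              simp [abs_of_nonneg]
          _ = 2 * C ^ 3 := by ring
      nlinarith [sq_nonneg a, neg_abs_le (2 * t * a * b)]
    have hmulnn : 0 ≤ -(2 * t) * (1 - t * a ^ 2 * M⁻¹) * M⁻¹ := by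
      apply mul_nonneg
      apply mul_nonneg (by linarith) (by linarith)
      positivity
    have hmulub : -(2 * t) * (1 - t * a ^ 2 * M⁻¹) * M⁻¹ ≤ 2 * C * (1 + C ^ 3) * M⁻¹ := by
      apply mul_le_mul_of_nonneg_right _ (by positivity)
      apply mul_le_mul _ hA2 (by linarith) (by positivity)
      linarith
    have hfinal : 2 * C * (1 + C ^ 3) * M⁻¹ * (2 * C ^ 3) ≤ 1 / 2 := by
      rw [show 2 * C * (1 + C ^ 3) * M⁻¹ * (2 * C ^ 3) = 4 * C ^ 4 * (1 + C ^ 3) * M⁻¹ by ring]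
      rw [show (1:ℝ)/2 = (M/2) * M⁻¹ by field_simp]
      apply mul_le_mul_of_nonneg_right _ (by positivity)
      linarith
    have key : -(2 * t) * (1 - t * a ^ 2 * M⁻¹) * M⁻¹ * (a ^ 2 + 2 * t * a * b) ≥ -(1/2) := by
      have s1 := mul_le_mul_of_nonneg_left hE hmulnn
      rw [mul_neg] at s1
      have s2 := mul_le_mul_of_nonneg_right hmulub (show (0:ℝ) ≤ 2 * C ^ 3 by positivity)
      linarith [hfinal]
    have hAsq : 1 ≤ (1 - t * a ^ 2 * M⁻¹) ^ 2 := by rw [pow_two]; nlinarith [hA1]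
    have hrw : (1 - t * a ^ 2 * M⁻¹) ^ 2
          - 2 * t * (1 - t * a ^ 2 * M⁻¹) * (a ^ 2 + 2 * t * a * b) * M⁻¹
        = (1 - t * a ^ 2 * M⁻¹) ^ 2
          + (-(2 * t) * (1 - t * a ^ 2 * M⁻¹) * M⁻¹ * (a ^ 2 + 2 * t * a * b)) := by ring
    rw [hrw]
    linarith [hAsq, key]
  · -- second part
    intro M hM x hx
    rw [hval M x, hcomp M x]
    rcases mul_eq_zero.mp hx with h | h <;> rw [h] <;> ring
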